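/- Counterexample to the necessity of the inverse condition for factorization: on Ω = [0, 1/2) with Lebesgue measure, let φ(t,u) = max(u − t, 0) and φ₁(t,u) = u. Then L^φ = L^{φ₁} = L^1, the conjugate is (φ⊖φ₁)(t,u) = 0 for 0 ≤ u ≤ 1 and ∞ for u > 1, so L^{φ⊖φ₁} = L^∞ and the factorization L^{φ₁} ⊙ L^{φ⊖φ₁} = L^φ holds; yet there is no constant D > 0 with D·φ₁^{-1}(t,u)·(φ⊖φ₁)^{-1}(t,u) ≥ φ^{-1}(t,u) for all t ∈ [0,1/2) and u ≥ 0, since φ₁^{-1}(t,u)(φ⊖φ₁)^{-1}(t,u) = u while φ^{-1}(t,u) = u + t. -/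

import Mathlib

open MeasureTheory ENNReal NNReal Filter

noncomputable section

variable {Ω : Type*} [MeasurableSpace Ω]

/-- A Young function: vanishes at zero, tends to infinity, and is convex in the
extended-value sense on `[0,∞)`. -/
def IsYoung (φ : ℝ≥0 → ℝ≥0∞) : Prop :=
  φ 0 = 0 ∧ Tendsto φ atTop (nhds (∞ : ℝ≥0∞)) ∧
    ∀ u v θ : ℝ≥0, θ ≤ 1 →
      φ (θ * u + (1 - θ) * v) ≤ (θ : ℝ≥0∞) * φ u + ((1 - θ : ℝ≥0) : ℝ≥0∞) * φ v

/-- A Musielak--Orlicz function: `φ t` is a Young function for a.e. `t` and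
`t ↦ φ t u` is measurable for each `u`. -/
def IsMusielakOrlicz (μ : Measure Ω) (φ : Ω → ℝ≥0 → ℝ≥0∞) : Prop :=
  (∀ᵐ t ∂μ, IsYoung (φ t)) ∧ ∀ u : ℝ≥0, Measurable fun t => φ t u

/-- `b_φ(t) = inf {u : φ(t,u) = ∞}` (equal to `∞` if `φ(t,·)` is finite everywhere). -/
def bFun (φ : Ω → ℝ≥0 → ℝ≥0∞) (t : Ω) : ℝ≥0∞ :=
  ⨅ (v : ℝ≥0) (_ : φ t v = ∞), (v : ℝ≥0∞)

/-- The convex modular `I_φ(x) = ∫ φ(t,|x(t)|) dμ`. -/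
def modular (μ : Measure Ω) (φ : Ω → ℝ≥0 → ℝ≥0∞) (x : Ω → ℝ) : ℝ≥0∞ :=
  ∫⁻ t, φ t ‖x t‖₊ ∂μ

/-- The Luxemburg norm `inf {λ > 0 : I_φ(x/λ) ≤ 1}` (with value `∞` if no such `λ`). -/
def luxNorm (μ : Measure Ω) (φ : Ω → ℝ≥0 → ℝ≥0∞) (x : Ω → ℝ) : ℝ≥0∞ :=
  ⨅ (lam : ℝ≥0) (_ : 0 < lam ∧ modular μ φ (fun t => x t / (lam : ℝ)) ≤ 1), (lam : ℝ≥0∞)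

/-- Membership in the Musielak--Orlicz space `L^φ`: `I_φ(λ x) < ∞` for some `λ > 0`. -/
def MemLphi (μ : Measure Ω) (φ : Ω → ℝ≥0 → ℝ≥0∞) (x : Ω → ℝ) : Prop :=
  ∃ lam : ℝ≥0, 0 < lam ∧ modular μ φ (fun t => (lam : ℝ) * x t) < ∞

/-- The generalized Young conjugate of `φ₁` with respect to `φ` (formula used
on the non-atomic part): `(φ ⊖ φ₁)(t,u) = sup {φ(t,su) - φ₁(t,s) : 0 ≤ s < b_{φ₁}(t)}`. -/
def ominus (φ φ₁ : Ω → ℝ≥0 → ℝ≥0∞) (t : Ω) (u : ℝ≥0) : ℝ≥0∞ :=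
  ⨆ (s : ℝ≥0) (_ : (s : ℝ≥0∞) < bFun φ₁ t), φ t (s * u) - φ₁ t s

/-- The right-continuous inverse `φ⁻¹(t,u) = inf {v ≥ 0 : φ(t,v) > u}`. -/
def rcInv (φ : Ω → ℝ≥0 → ℝ≥0∞) (t : Ω) (u : ℝ≥0∞) : ℝ≥0∞ :=
  ⨅ (v : ℝ≥0) (_ : u < φ t v), (v : ℝ≥0∞)

/-- The generalized Young conjugate on the whole space: at an atom `t`
the supremum is taken over `0 ≤ s ≤ min (1/φ⁻¹(t,1/μ{t})) (b_{φ₁}(t)/2)`. -/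
def ominusFull (μ : Measure Ω) (φ φ₁ : Ω → ℝ≥0 → ℝ≥0∞) (t : Ω) (u : ℝ≥0) : ℝ≥0∞ :=
  if μ {t} = 0 then ominus φ φ₁ t u
  else ⨆ (s : ℝ≥0) (_ : (s : ℝ≥0∞) ≤ min (rcInv φ t (μ {t})⁻¹)⁻¹ (bFun φ₁ t / 2)),
    φ t (s * u) - φ₁ t s

/-- `y` is a pointwise multiplier from `L^{φ₁}` to `L^{φ}`. -/
def MemMul (μ : Measure Ω) (φ₁ φ : Ω → ℝ≥0 → ℝ≥0∞) (y : Ω → ℝ) : Prop :=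
  ∀ x : Ω → ℝ, Measurable x → MemLphi μ φ₁ x → MemLphi μ φ (fun t => x t * y t)

/-- The operator norm of a pointwise multiplier. -/
def mulNorm (μ : Measure Ω) (φ₁ φ : Ω → ℝ≥0 → ℝ≥0∞) (y : Ω → ℝ) : ℝ≥0∞ :=
  ⨆ (x : Ω → ℝ) (_ : Measurable x ∧ luxNorm μ φ₁ x ≤ 1), luxNorm μ φ (fun t => x t * y t)

/-- The truncated generalized Young conjugate `φ ⊖_a φ₁` (non-atomic part):
supremum over `0 ≤ s ≤ a` when `b_{φ₁}(t) = ∞`, and over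
`0 ≤ s ≤ (a/(a+1)) b_{φ₁}(t)` when `b_{φ₁}(t) < ∞`. -/
def ominusTr (a : ℝ≥0) (φ φ₁ : Ω → ℝ≥0 → ℝ≥0∞) (t : Ω) (u : ℝ≥0) : ℝ≥0∞ :=
  if bFun φ₁ t = ∞ then ⨆ (s : ℝ≥0) (_ : s ≤ a), φ t (s * u) - φ₁ t s
  else ⨆ (s : ℝ≥0) (_ : (s : ℝ≥0∞) ≤ ((a : ℝ≥0∞) / ((a : ℝ≥0∞) + 1)) * bFun φ₁ t),
    φ t (s * u) - φ₁ t s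


section Counterexample

def phE : ℝ → ℝ≥0 → ℝ≥0∞ := fun t u => ENNReal.ofReal ((u : ℝ) - t)
def ph1E : ℝ → ℝ≥0 → ℝ≥0∞ := fun _ u => (u : ℝ≥0∞)

lemma bFun_ph1 (t : ℝ) : bFun ph1E t = ∞ := by
  simp [bFun, ph1E]

lemma ominus_eq (t : ℝ) (ht : t ∈ Set.Ico (0:ℝ) (1/2)) (u : ℝ≥0) :
    ominus phE ph1E t u = if u ≤ 1 then 0 else ∞ := by
  obtain ⟨ht0, ht2⟩ := ht
  rw [ominus]
  simp only [bFun_ph1, coe_lt_top, iSup_pos, ph1E, phE]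
  split_ifs with hu
  · rw [ENNReal.iSup_eq_zero]
    intro s
    refine tsub_eq_zero_of_le ?_
    calc ENNReal.ofReal ((s*u:ℝ≥0) - t) ≤ ENNReal.ofReal ((s*u:ℝ≥0):ℝ) :=
          ENNReal.ofReal_le_ofReal (by linarith)
      _ = ((s*u : ℝ≥0) : ℝ≥0∞) := ENNReal.ofReal_coe_nnreal
      _ ≤ (s : ℝ≥0∞) := by
          exact_mod_cast mul_le_of_le_one_right zero_le hu
  · push_neg at hu
    have hu' : (1:ℝ) < u := by exact_mod_cast hu
    rw [iSup_eq_top]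
    intro b hb
    lift b to ℝ≥0 using hb.ne
    obtain ⟨s, hs⟩ : ∃ s : ℝ≥0, (b : ℝ) + 2 ≤ s * ((u:ℝ) - 1) := by
      refine ⟨⟨((b:ℝ)+2)/((u:ℝ)-1), div_nonneg (by positivity) (by linarith)⟩, ?_⟩
      show (b:ℝ) + 2 ≤ ((b:ℝ)+2)/((u:ℝ)-1) * ((u:ℝ) - 1)
      exact le_of_eq (div_mul_cancel₀ _ (sub_pos.mpr hu').ne').symm
    refine ⟨s, ?_⟩
    have h1 : (b:ℝ) + 1 + s ≤ ((s*u:ℝ≥0):ℝ) - t := by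
      push_cast
      nlinarith [s.coe_nonneg]
    calc (b:ℝ≥0∞) < ((b+1:ℝ≥0):ℝ≥0∞) := ENNReal.coe_lt_coe.mpr (lt_add_one b)
      _ ≤ ENNReal.ofReal (((s*u:ℝ≥0):ℝ) - t) - s := by
          refine ENNReal.le_sub_of_add_le_right coe_ne_top ?_
          rw [← ENNReal.coe_add, ← ENNReal.ofReal_coe_nnreal]
          exact ENNReal.ofReal_le_ofReal (by push_cast; linarith)

end Counterexample

lemma rcInv_ph1 (t : ℝ) (u : ℝ≥0) : rcInv ph1E t (u : ℝ≥0∞) = (u : ℝ≥0∞) := by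
  rw [rcInv]
  apply le_antisymm
  · refine ENNReal.le_of_forall_pos_le_add fun ε hε _ => ?_
    refine iInf₂_le_of_le (u + ε) ?_ ?_
    · show (u:ℝ≥0∞) < ((u + ε : ℝ≥0) : ℝ≥0∞)
      exact_mod_cast lt_add_of_pos_right u hε
    · rw [ENNReal.coe_add]
  · exact le_iInf₂ fun v hv => hv.le

lemma rcInv_ominus (t : ℝ) (ht : t ∈ Set.Ico (0:ℝ) (1/2)) (u : ℝ≥0) :
    rcInv (ominus phE ph1E) t (u : ℝ≥0∞) = 1 := by
  rw [rcInv]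
  apply le_antisymm
  · refine ENNReal.le_of_forall_pos_le_add fun ε hε _ => ?_
    refine iInf₂_le_of_le (1 + ε) ?_ ?_
    · rw [ominus_eq t ht]
      have : ¬ (1 + ε ≤ 1) := by
        simp only [add_le_iff_nonpos_right]
        exact fun h => absurd (le_antisymm h zero_le) hε.ne'
      rw [if_neg this]
      exact coe_lt_top
    · rw [ENNReal.coe_add]; rfl
  · refine le_iInf₂ fun v hv => ?_
    rw [ominus_eq t ht] at hv
    by_cases h : v ≤ 1
    · rw [if_pos h] at hv; exact absurd hv (by simp)
    · push_neg at h
      exact_mod_cast h.le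

lemma rcInv_ph (t : ℝ) (ht : t ∈ Set.Ico (0:ℝ) (1/2)) (u : ℝ≥0) :
    rcInv phE t (u : ℝ≥0∞) = (u : ℝ≥0∞) + ENNReal.ofReal t := by
  obtain ⟨ht0, _⟩ := ht
  rw [rcInv]
  apply le_antisymm
  · refine ENNReal.le_of_forall_pos_le_add fun ε hε _ => ?_
    refine iInf₂_le_of_le (u + t.toNNReal + ε) ?_ ?_
    · show (u:ℝ≥0∞) < ENNReal.ofReal (((u + t.toNNReal + ε : ℝ≥0):ℝ) - t)
      have : ((u + t.toNNReal + ε : ℝ≥0):ℝ) - t = (u:ℝ) + ε := by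
        push_cast [Real.coe_toNNReal t ht0]; ring
      rw [this]
      rw [show ((u:ℝ) + ε) = ((u + ε : ℝ≥0) : ℝ) by push_cast; ring,
        ENNReal.ofReal_coe_nnreal]
      exact_mod_cast lt_add_of_pos_right u hε
    · rw [ENNReal.coe_add, ENNReal.coe_add, ENNReal.ofReal_eq_coe_nnreal ht0,
        Real.toNNReal_of_nonneg ht0]
  · refine le_iInf₂ fun v hv => ?_
    have hv' : (u:ℝ) < (v:ℝ) - t := by
      have := (ENNReal.lt_ofReal_iff_toReal_lt coe_ne_top).mp hv
      simpa using this
    calc (u:ℝ≥0∞) + ENNReal.ofReal t = ENNReal.ofReal ((u:ℝ) + t) := by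
          rw [ENNReal.ofReal_add u.coe_nonneg ht0, ENNReal.ofReal_coe_nnreal]
      _ ≤ ENNReal.ofReal (v:ℝ) := ENNReal.ofReal_le_ofReal (by linarith)
      _ = (v:ℝ≥0∞) := ENNReal.ofReal_coe_nnreal

def muE : Measure ℝ := volume.restrict (Set.Ico (0:ℝ) (1/2))

lemma aux_finite {lam : ℝ≥0} (hlam : 0 < lam) {I : ℝ≥0∞}
    (h : (lam : ℝ≥0∞) * I < ∞) : I < ∞ := by
  by_contra hI
  rw [not_lt, top_le_iff] at hI
  rw [hI, ENNReal.mul_top (by exact_mod_cast hlam.ne')] at h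
  exact absurd h (lt_irrefl _)

lemma nnnorm_smul' (lam : ℝ≥0) (r : ℝ) : ‖(lam:ℝ) * r‖₊ = lam * ‖r‖₊ := by
  rw [nnnorm_mul]
  congr 1
  ext
  simp [Real.norm_of_nonneg lam.coe_nonneg]

lemma lint_smul (x : ℝ → ℝ) (hx : Measurable x) (lam : ℝ≥0) :
    (∫⁻ t, (‖(lam:ℝ) * x t‖₊ : ℝ≥0∞) ∂muE) = lam * ∫⁻ t, (‖x t‖₊ : ℝ≥0∞) ∂muE := by
  simp_rw [nnnorm_smul', ENNReal.coe_mul]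
  exact lintegral_const_mul _ hx.nnnorm.coe_nnreal_ennreal

lemma mem_ph1_iff (x : ℝ → ℝ) (hx : Measurable x) :
    MemLphi muE ph1E x ↔ (∫⁻ t, (‖x t‖₊ : ℝ≥0∞) ∂muE) < ∞ := by
  constructor
  · rintro ⟨lam, hlam, hmod⟩
    rw [modular] at hmod
    simp only [ph1E] at hmod
    rw [lint_smul x hx lam] at hmod
    exact aux_finite hlam hmod
  · intro h
    refine ⟨1, one_pos, ?_⟩
    rw [modular]
    simp only [ph1E, NNReal.coe_one, one_mul]
    exact h

lemma mem_ph_iff (x : ℝ → ℝ) (hx : Measurable x) :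
    MemLphi muE phE x ↔ (∫⁻ t, (‖x t‖₊ : ℝ≥0∞) ∂muE) < ∞ := by
  constructor
  · rintro ⟨lam, hlam, hmod⟩
    rw [modular] at hmod
    simp only [phE] at hmod
    have hbd : ∀ᵐ t ∂muE, (‖(lam:ℝ) * x t‖₊ : ℝ≥0∞) ≤
        ENNReal.ofReal ((‖(lam:ℝ) * x t‖₊ : ℝ) - t) + ENNReal.ofReal 2⁻¹ := by
      refine (ae_restrict_mem measurableSet_Ico).mono fun t ht => ?_
      obtain ⟨ht0, ht2⟩ := ht
      set a : ℝ := (‖(lam:ℝ) * x t‖₊ : ℝ) with ha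
      calc (‖(lam:ℝ) * x t‖₊ : ℝ≥0∞) = ENNReal.ofReal a := by
            rw [ha, ENNReal.ofReal_coe_nnreal]
        _ ≤ ENNReal.ofReal ((a - t) + 2⁻¹) :=
            ENNReal.ofReal_le_ofReal (by linarith)
        _ ≤ ENNReal.ofReal (a - t) + ENNReal.ofReal 2⁻¹ := ENNReal.ofReal_add_le
    have h1 : (∫⁻ t, (‖(lam:ℝ) * x t‖₊ : ℝ≥0∞) ∂muE) ≤
        (∫⁻ t, ENNReal.ofReal ((‖(lam:ℝ) * x t‖₊ : ℝ) - t) ∂muE) +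
          ENNReal.ofReal 2⁻¹ * muE Set.univ := by
      calc (∫⁻ t, (‖(lam:ℝ) * x t‖₊ : ℝ≥0∞) ∂muE)
          ≤ ∫⁻ t, (ENNReal.ofReal ((‖(lam:ℝ) * x t‖₊ : ℝ) - t) + ENNReal.ofReal 2⁻¹) ∂muE :=
            lintegral_mono_ae hbd
        _ = (∫⁻ t, ENNReal.ofReal ((‖(lam:ℝ) * x t‖₊ : ℝ) - t) ∂muE) +
            ENNReal.ofReal 2⁻¹ * muE Set.univ := by
            rw [lintegral_add_right _ measurable_const, lintegral_const]
    have hμ : muE Set.univ < ∞ := by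
      rw [muE, Measure.restrict_apply_univ]
      simp [Real.volume_Ico]
    have h2 : (∫⁻ t, (‖(lam:ℝ) * x t‖₊ : ℝ≥0∞) ∂muE) < ∞ :=
      lt_of_le_of_lt h1 (ENNReal.add_lt_top.mpr
        ⟨hmod, ENNReal.mul_lt_top ENNReal.ofReal_lt_top hμ⟩)
    rw [lint_smul x hx lam] at h2
    exact aux_finite hlam h2
  · intro h
    refine ⟨1, one_pos, ?_⟩
    rw [modular]
    simp only [phE, NNReal.coe_one, one_mul]
    refine lt_of_le_of_lt (lintegral_mono_ae ?_) h
    refine (ae_restrict_mem measurableSet_Ico).mono fun t ht => ?_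
    calc ENNReal.ofReal ((‖x t‖₊ : ℝ) - t) ≤ ENNReal.ofReal (‖x t‖₊ : ℝ) :=
          ENNReal.ofReal_le_ofReal (by linarith [ht.1])
      _ = (‖x t‖₊ : ℝ≥0∞) := ENNReal.ofReal_coe_nnreal

lemma mem_ominus_one : MemLphi muE (ominus phE ph1E) (fun _ => (1:ℝ)) := by
  refine ⟨1, one_pos, ?_⟩
  rw [modular]
  have hle : (∫⁻ t, ominus phE ph1E t ‖((1:ℝ≥0):ℝ) * (1:ℝ)‖₊ ∂muE) ≤ ∫⁻ _, 0 ∂muE := by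
    refine lintegral_mono_ae ((ae_restrict_mem measurableSet_Ico).mono fun t ht => ?_)
    rw [show ‖((1:ℝ≥0):ℝ) * (1:ℝ)‖₊ = 1 by simp, ominus_eq t ht, if_pos le_rfl]
  exact lt_of_le_of_lt hle (by simp)

lemma mem_ominus_bound {y : ℝ → ℝ} (hy : Measurable y)
    (h : MemLphi muE (ominus phE ph1E) y) :
    ∃ lam : ℝ≥0, 0 < lam ∧ ∀ᵐ t ∂muE, ‖y t‖₊ ≤ lam⁻¹ := by
  obtain ⟨lam, hlam, hmod⟩ := h
  refine ⟨lam, hlam, ?_⟩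
  set S : Set ℝ := {t | 1 < lam * ‖y t‖₊} ∩ Set.Ico (0:ℝ) (1/2) with hS
  have hSm : MeasurableSet S := by
    refine MeasurableSet.inter ?_ measurableSet_Ico
    exact measurableSet_lt measurable_const ((measurable_const.mul hy.nnnorm))
  have hS0 : muE S = 0 := by
    by_contra hne
    have hbd : ∀ t, S.indicator (fun _ => (∞:ℝ≥0∞)) t ≤
        ominus phE ph1E t ‖(lam:ℝ) * y t‖₊ := by
      intro t
      by_cases htS : t ∈ S
      · rw [Set.indicator_of_mem htS]
        rw [nnnorm_smul', ominus_eq t htS.2, if_neg (not_le.mpr htS.1)]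
      · rw [Set.indicator_of_notMem htS]; exact zero_le
    have : (∞:ℝ≥0∞) * muE S ≤ modular muE (ominus phE ph1E) (fun t => (lam:ℝ) * y t) := by
      rw [modular, ← lintegral_indicator_const hSm]
      exact lintegral_mono hbd
    rw [ENNReal.top_mul hne] at this
    exact absurd (lt_of_le_of_lt this hmod) (lt_irrefl _)
  have : ∀ᵐ t ∂muE, t ∈ Set.Ico (0:ℝ) (1/2) → ¬(1 < lam * ‖y t‖₊) := by
    rw [ae_iff]
    refine measure_mono_null (fun t ht => ?_) hS0
    simp only [Set.mem_setOf_eq, not_forall, not_not] at ht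
    exact ⟨ht.2, ht.1⟩
  refine (this.and (ae_restrict_mem measurableSet_Ico)).mono fun t ⟨h1, h2⟩ => ?_
  have hle : lam * ‖y t‖₊ ≤ 1 := not_lt.mp (h1 h2)
  calc ‖y t‖₊ = lam⁻¹ * (lam * ‖y t‖₊) := by
        rw [← mul_assoc, inv_mul_cancel₀ hlam.ne', one_mul]
    _ ≤ lam⁻¹ * 1 := mul_le_mul_right hle _
    _ = lam⁻¹ := mul_one _

lemma factIff (z : ℝ → ℝ) (hz : Measurable z) :
    MemLphi muE phE z ↔ ∃ x y : ℝ → ℝ, Measurable x ∧ Measurable y ∧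
      MemLphi muE ph1E x ∧ MemLphi muE (ominus phE ph1E) y ∧ ∀ t, z t = x t * y t := by
  constructor
  · intro h
    exact ⟨z, fun _ => 1, hz, measurable_const,
      (mem_ph1_iff z hz).mpr ((mem_ph_iff z hz).mp h), mem_ominus_one,
      fun t => (mul_one _).symm⟩
  · rintro ⟨x, y, hx, hy, hx1, hy1, hzxy⟩
    rw [mem_ph_iff z hz]
    obtain ⟨lam, hlam, hae⟩ := mem_ominus_bound hy hy1
    have hxI := (mem_ph1_iff x hx).mp hx1
    have hle : (∫⁻ t, (‖z t‖₊:ℝ≥0∞) ∂muE) ≤ ((lam⁻¹ : ℝ≥0) : ℝ≥0∞) * ∫⁻ t, (‖x t‖₊:ℝ≥0∞) ∂muE := by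
      rw [← lintegral_const_mul _ hx.nnnorm.coe_nnreal_ennreal]
      refine lintegral_mono_ae (hae.mono fun t ht => ?_)
      rw [hzxy t, nnnorm_mul]
      calc ((‖x t‖₊ * ‖y t‖₊ : ℝ≥0) : ℝ≥0∞) ≤ ((‖x t‖₊ * lam⁻¹ : ℝ≥0):ℝ≥0∞) := by
            exact_mod_cast mul_le_mul_right ht _
        _ = ((lam⁻¹:ℝ≥0):ℝ≥0∞) * ‖x t‖₊ := by rw [ENNReal.coe_mul, mul_comm]
    exact lt_of_le_of_lt hle (ENNReal.mul_lt_top coe_lt_top hxI)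

/-- **counterexample.** On `Ω = [0,1/2)` with Lebesgue measure,
for `φ(t,u) = max(u - t, 0)` and `φ₁(t,u) = u`: both spaces equal `L¹`, the
conjugate is the `L^∞`-type function `(φ⊖φ₁)(t,u) = 0` for `u ≤ 1` and `∞` for
`u > 1` (so the factorization `L^{φ₁} ⊙ L^{φ⊖φ₁} = L^φ` holds), the inverses
are `φ₁⁻¹(t,u) = u`, `(φ⊖φ₁)⁻¹(t,u) = 1`, `φ⁻¹(t,u) = u + t`, and yet there is
no `D > 0` with `D·φ₁⁻¹(t,u)·(φ⊖φ₁)⁻¹(t,u) ≥ φ⁻¹(t,u)` everywhere. -/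
theorem factorization_counterexample :
    let μ : Measure ℝ := volume.restrict (Set.Ico (0 : ℝ) (1 / 2))
    let φ : ℝ → ℝ≥0 → ℝ≥0∞ := fun t u => ENNReal.ofReal ((u : ℝ) - t)
    let φ₁ : ℝ → ℝ≥0 → ℝ≥0∞ := fun _ u => (u : ℝ≥0∞)
    -- L^φ = L^{φ₁} = L¹
    (∀ x : ℝ → ℝ, Measurable x →
      ((MemLphi μ φ x ↔ (∫⁻ t, (‖x t‖₊ : ℝ≥0∞) ∂μ) < ∞) ∧
       (MemLphi μ φ₁ x ↔ (∫⁻ t, (‖x t‖₊ : ℝ≥0∞) ∂μ) < ∞))) ∧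
    -- the conjugate function
    (∀ t ∈ Set.Ico (0 : ℝ) (1 / 2), ∀ u : ℝ≥0,
      ominus φ φ₁ t u = if u ≤ 1 then 0 else ∞) ∧
    -- the factorization L^{φ₁} ⊙ L^{φ⊖φ₁} = L^φ
    (∀ z : ℝ → ℝ, Measurable z →
      (MemLphi μ φ z ↔
        ∃ x y : ℝ → ℝ, Measurable x ∧ Measurable y ∧
          MemLphi μ φ₁ x ∧ MemLphi μ (ominus φ φ₁) y ∧ ∀ t, z t = x t * y t)) ∧
    -- the inverse computations
    (∀ t ∈ Set.Ico (0 : ℝ) (1 / 2), ∀ u : ℝ≥0,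
      rcInv φ₁ t u = (u : ℝ≥0∞) ∧ rcInv (ominus φ φ₁) t u = 1 ∧
      rcInv φ t u = (u : ℝ≥0∞) + ENNReal.ofReal t) ∧
    -- failure of the lower inverse estimate
    ¬ ∃ D : ℝ≥0∞, 0 < D ∧ ∀ t ∈ Set.Ico (0 : ℝ) (1 / 2), ∀ u : ℝ≥0,
        rcInv φ t u ≤ D * rcInv φ₁ t u * rcInv (ominus φ φ₁) t u := by
  intro μ φ φ₁
  refine ⟨?_, ?_, ?_, ?_, ?_⟩
  · intro x hx
    exact ⟨mem_ph_iff x hx, mem_ph1_iff x hx⟩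
  · intro t ht u
    exact ominus_eq t ht u
  · intro z hz
    exact factIff z hz
  · intro t ht u
    exact ⟨rcInv_ph1 t u, rcInv_ominus t ht u, rcInv_ph t ht u⟩
  · rintro ⟨D, hD, h⟩
    have ht : (4⁻¹:ℝ) ∈ Set.Ico (0:ℝ) (1/2) := by norm_num
    have hc := h 4⁻¹ ht 0
    rw [show rcInv φ 4⁻¹ ((0:ℝ≥0):ℝ≥0∞) = ((0:ℝ≥0):ℝ≥0∞) + ENNReal.ofReal 4⁻¹ from
      rcInv_ph 4⁻¹ ht 0,
      show rcInv φ₁ 4⁻¹ ((0:ℝ≥0):ℝ≥0∞) = ((0:ℝ≥0):ℝ≥0∞) from rcInv_ph1 4⁻¹ 0,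
      show rcInv (ominus φ φ₁) 4⁻¹ ((0:ℝ≥0):ℝ≥0∞) = 1 from rcInv_ominus 4⁻¹ ht 0] at hc
    simp only [ENNReal.coe_zero, zero_add, mul_zero, mul_one, zero_mul] at hc
    rw [nonpos_iff_eq_zero, ENNReal.ofReal_eq_zero] at hc
    norm_num at hc

end
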